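/- Let d, s be positive integers, let Λ_{ij} ∈ ℕ for 1 ≤ i ≤ d and 1 ≤ j ≤ s, let p_1,…,p_d and q_1,…,q_s be positive integers, and let r_1,…,r_s be positive real numbers. Assume that Σ_{i=1}^d Λ_{ij}·p_i = q_j for every j (the unital inclusion condition for the inclusion matrix Λ). Then Σ_{i=1}^d (1/p_i²)·(Σ_{j=1}^s Λ_{ij} p_i r_j / q_j)² ≥ Σ_{j=1}^s r_j²/q_j². -/

import Mathlib

/-- numerical core of Lemma 3.8: if `Λ` is the inclusion
matrix of a unital inclusion (so `Σ_i Λ_{ij} p_i = q_j`), then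
`Σ_i (1/p_i²)(Σ_j Λ_{ij} p_i r_j/q_j)² ≥ Σ_j r_j²/q_j²`. -/
theorem stmt_5 (d s : ℕ) (hd : 0 < d) (hs : 0 < s)
    (Λ : Fin d → Fin s → ℕ)
    (P : Fin d → ℕ) (q : Fin s → ℕ) (hP : ∀ i, 0 < P i) (hq : ∀ j, 0 < q j)
    (r : Fin s → ℝ) (hr : ∀ j, 0 < r j)
    (hincl : ∀ j, ∑ i, Λ i j * P i = q j) :
    ∑ j, (r j) ^ 2 / (q j : ℝ) ^ 2 ≤
      ∑ i, (1 / (P i : ℝ) ^ 2) *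
        (∑ j, (Λ i j : ℝ) * (P i : ℝ) * r j / (q j : ℝ)) ^ 2 := by
  have hP' : ∀ i, (P i : ℝ) ≠ 0 := fun i => Nat.cast_ne_zero.mpr (hP i).ne'
  have hq' : ∀ j, (q j : ℝ) ≠ 0 := fun j => Nat.cast_ne_zero.mpr (hq j).ne'
  have hrw : ∀ i, (1 / (P i : ℝ) ^ 2) *
      (∑ j, (Λ i j : ℝ) * (P i : ℝ) * r j / (q j : ℝ)) ^ 2
      = (∑ j, (Λ i j : ℝ) * (r j / (q j : ℝ))) ^ 2 := by
    intro i
    have : (∑ j, (Λ i j : ℝ) * (P i : ℝ) * r j / (q j : ℝ))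
        = (P i : ℝ) * ∑ j, (Λ i j : ℝ) * (r j / (q j : ℝ)) := by
      rw [Finset.mul_sum]; congr 1; ext j; field_simp
    rw [this, mul_pow]
    field_simp
    exact mul_div_cancel_left₀ _ (hP' i)
  rw [Finset.sum_congr rfl fun i _ => hrw i]
  calc ∑ j, (r j) ^ 2 / (q j : ℝ) ^ 2
      ≤ ∑ j, (∑ i, ((Λ i j : ℝ) * (r j / (q j : ℝ))) ^ 2) := by
        apply Finset.sum_le_sum
        intro j _
        have hqj : (0:ℝ) < q j := by exact_mod_cast hq j
        have hx : (0:ℝ) < (r j / (q j : ℝ)) ^ 2 :=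
          pow_pos (div_pos (hr j) hqj) 2
        obtain ⟨i, hi⟩ : ∃ i, 1 ≤ Λ i j := by
          by_contra h
          push_neg at h
          have : ∑ i, Λ i j * P i = 0 := by
            apply Finset.sum_eq_zero; intro i _
            have : Λ i j = 0 := Nat.lt_one_iff.mp (h i)
            simp [this]
          rw [hincl j] at this
          exact (hq j).ne' this
        have h1 : (r j) ^ 2 / (q j : ℝ) ^ 2 = ((Λ i j : ℝ) * (r j / (q j : ℝ))) ^ 2 / (Λ i j : ℝ)^2 := by
          have hΛ : (Λ i j : ℝ) ≠ 0 := by positivity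
          rw [mul_pow, mul_comm, mul_div_assoc, div_self (pow_ne_zero 2 hΛ), mul_one, div_pow]
        have hΛ1 : (1:ℝ) ≤ (Λ i j : ℝ) := by exact_mod_cast hi
        have : (r j) ^ 2 / (q j : ℝ) ^ 2 ≤ ((Λ i j : ℝ) * (r j / (q j : ℝ))) ^ 2 := by
          rw [h1]
          apply div_le_self (by positivity)
          nlinarith
        refine this.trans ?_
        exact Finset.single_le_sum (f := fun i => ((Λ i j : ℝ) * (r j / (q j : ℝ))) ^ 2)
          (fun i _ => by positivity) (Finset.mem_univ i)
    _ = ∑ i, ∑ j, ((Λ i j : ℝ) * (r j / (q j : ℝ))) ^ 2 := Finset.sum_comm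
    _ ≤ ∑ i, (∑ j, (Λ i j : ℝ) * (r j / (q j : ℝ))) ^ 2 := by
        apply Finset.sum_le_sum
        intro i _
        exact Finset.sum_sq_le_sq_sum_of_nonneg (fun j _ =>
          mul_nonneg (by positivity)
            (le_of_lt (div_pos (hr j) (by exact_mod_cast hq j))))
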